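/- Let L be a topological group, G a dense subgroup of L, M an open subgroup of L, and set H = G ∩ M. Then for every x ∈ G, the closure in L of the set H ∩ xHx⁻¹ equals M ∩ xMx⁻¹. -/

import Mathlib

/-- Let `L` be a topological group, `G` a dense subgroup, `M` an open
subgroup, `H = G ⊓ M`.  For every `x ∈ G`, the closure of `H ∩ x H x⁻¹` equals
`M ∩ x M x⁻¹` (an element `h` lies in `x A x⁻¹` iff `x⁻¹ h x ∈ A`). -/
theorem stmt_7 {L : Type*} [Group L] [TopologicalSpace L] [IsTopologicalGroup L]
    (M G : Subgroup L) (hMo : IsOpen (M : Set L)) (hG : Dense (G : Set L))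
    (x : L) (hx : x ∈ G) :
    closure {h : L | h ∈ G ⊓ M ∧ x⁻¹ * h * x ∈ G ⊓ M} =
      {h : L | h ∈ M ∧ x⁻¹ * h * x ∈ M} := by
  -- the subgroup N = M ∩ xMx⁻¹
  set N : Subgroup L := M ⊓ M.comap (MulAut.conj x⁻¹).toMonoidHom with hN
  have hNset : {h : L | h ∈ M ∧ x⁻¹ * h * x ∈ M} = (N : Set L) := by
    ext h
    simp [hN, Subgroup.mem_inf, Subgroup.mem_comap, MulAut.conj, mul_assoc]
  have hNopen : IsOpen (N : Set L) := by
    have : (N : Set L) = (M : Set L) ∩ (fun h => x⁻¹ * h * x) ⁻¹' (M : Set L) := by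
      ext h
      simp [hN, Subgroup.mem_inf, Subgroup.mem_comap, MulAut.conj, mul_assoc]
    rw [this]
    exact hMo.inter (hMo.preimage (by continuity))
  have hNclosed : IsClosed (N : Set L) := N.isClosed_of_isOpen hNopen
  have hNmem : ∀ h : L, h ∈ N ↔ h ∈ M ∧ x⁻¹ * h * x ∈ M := fun h => by
    rw [← SetLike.mem_coe, ← hNset]; rfl
  have hSset : {h : L | h ∈ G ⊓ M ∧ x⁻¹ * h * x ∈ G ⊓ M} = (G : Set L) ∩ (N : Set L) := by
    ext h
    simp only [Set.mem_setOf_eq, Subgroup.mem_inf, Set.mem_inter_iff, SetLike.mem_coe, hNmem]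
    constructor
    · rintro ⟨⟨h1, h2⟩, _, h4⟩
      exact ⟨h1, h2, h4⟩
    · rintro ⟨h1, h2, h3⟩
      exact ⟨⟨h1, h2⟩, G.mul_mem (G.mul_mem (G.inv_mem hx) h1) hx, h3⟩
  rw [hSset, hNset]
  apply le_antisymm
  · exact closure_minimal Set.inter_subset_right hNclosed
  · intro u hu
    rw [mem_closure_iff]
    intro o ho hou
    have : ((o ∩ N) ∩ G).Nonempty := by
      have hmem : u ∈ closure (G : Set L) := hG u
      rw [mem_closure_iff] at hmem
      exact hmem (o ∩ N) (ho.inter hNopen) ⟨hou, hu⟩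
    obtain ⟨g, ⟨hgo, hgN⟩, hgG⟩ := this
    exact ⟨g, hgo, hgG, hgN⟩
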